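/- Let 0 < A < B < ∞, 0 < M < ∞ and r > 1. Suppose D₁, D₂, …, D_N are pairwise disjoint simply connected domains, each contained in ℂ ∖ {0}, such that ∫_{r^A}^{r^B} π/(t·θ_{D_j}(t)) dt ≤ M·log r for each j = 1, …, N. Then N·(B − A) ≤ 2M. -/

import Mathlib

open Complex Set Filter MeasureTheory Topology
open scoped ENNReal

noncomputable section

/-- The open upper half-plane, as a subset of `ℂ`. -/
def UHP : Set ℂ := {z : ℂ | 0 < z.im}

/-- A real entire function: entire, mapping `ℝ` into `ℝ`. -/
def RealEntire (f : ℂ → ℂ) : Prop :=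
  Differentiable ℂ f ∧ ∀ x : ℝ, (f (x : ℂ)).im = 0

/-- A function is transcendental if it is not a polynomial. -/
def TranscendentalFun (f : ℂ → ℂ) : Prop :=
  ¬ ∃ p : Polynomial ℂ, ∀ z : ℂ, f z = p.eval z

/-- The maximum modulus `M(r, f)`. -/
def maxMod (f : ℂ → ℂ) (r : ℝ) : ℝ :=
  sSup ((fun z => ‖f z‖) '' Metric.sphere (0 : ℂ) r)

/-- `f` has infinite order: `limsup (log log M(r,f)) / log r = ∞`. -/
def InfiniteOrder (f : ℂ → ℂ) : Prop :=
  ∀ c r₀ : ℝ, ∃ r : ℝ, r₀ ≤ r ∧ c * Real.log r < Real.log (Real.log (maxMod f r))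

/-- `f` has only finitely many non-real zeros. -/
def FinitelyManyNonRealZeros (f : ℂ → ℂ) : Prop :=
  {z : ℂ | z.im ≠ 0 ∧ f z = 0}.Finite

open Classical in
/-- The order of a meromorphic function at a point (junk value `0` if not meromorphic there). -/
def merOrder (g : ℂ → ℂ) (z : ℂ) : WithTop ℤ :=
  if h : MeromorphicAt g z then meromorphicOrderAt g z else 0

/-- Multiplicity of `z` as a zero of `g` (0 if not a zero). -/
def zeroMult (g : ℂ → ℂ) (z : ℂ) : ℕ := ((WithTop.untopD 0 (merOrder g z))).toNat

/-- Multiplicity of `z` as a pole of `g` (0 if not a pole). -/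
def poleMult (g : ℂ → ℂ) (z : ℂ) : ℕ := (-(WithTop.untopD 0 (merOrder g z))).toNat

/-- `g` has a pole at `z`. -/
def IsPoleAt (g : ℂ → ℂ) (z : ℂ) : Prop := MeromorphicAt g z ∧ merOrder g z < 0

/-- The Weierstrass primary factor `E_q(w)`. -/
def weierstrassE (q : ℕ) (w : ℂ) : ℂ :=
  (1 - w) * Complex.exp (∑ k ∈ Finset.range q, w ^ (k + 1) / ((k : ℂ) + 1))

/-- A real entire function with only real zeros, of genus at most `2p+1`,
written in Hadamard product form. -/
def GenusForm (p : ℕ) (g : ℂ → ℂ) : Prop :=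
  ∃ (c : ℝ) (μ : ℕ) (Q : Polynomial ℝ) (q : ℕ) (ι : Type) (a : ι → ℝ),
    Countable ι ∧ c ≠ 0 ∧ Q.natDegree ≤ 2 * p + 1 ∧ q ≤ 2 * p + 1 ∧
    (∀ i, a i ≠ 0) ∧ Summable (fun i => |a i| ^ (-((q : ℝ) + 1))) ∧
    ∀ z : ℂ, g z = (c : ℂ) * z ^ μ * Complex.exp ((Q.map (algebraMap ℝ ℂ)).eval z) *
      ∏' i, weierstrassE q (z / (a i : ℂ))

/-- The class `V_{2p}`. -/
def VClass (p : ℕ) : Set (ℂ → ℂ) :=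
  {f | ∃ (a : ℝ) (g : ℂ → ℂ), 0 ≤ a ∧ Differentiable ℂ g ∧ GenusForm p g ∧
    ∀ z : ℂ, f z = g z * Complex.exp (-(a : ℂ) * z ^ (2 * p + 2))}

/-- The class `U_{2p}`: `U_0 = V_0`, `U_{2p} = V_{2p} \ V_{2p-2}` for `p ≥ 1`. -/
def UClass (p : ℕ) : Set (ℂ → ℂ) :=
  if p = 0 then VClass 0 else VClass p \ VClass (p - 1)

/-- The class `U_{2p}^*`: functions `f = P·h` with `h ∈ U_{2p}` and `P` a real
polynomial without real zeros. -/
def UStarClass (p : ℕ) : Set (ℂ → ℂ) :=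
  {f | ∃ (P : Polynomial ℝ) (h : ℂ → ℂ), (∀ x : ℝ, P.eval x ≠ 0) ∧ h ∈ UClass p ∧
    ∀ z : ℂ, f z = (P.map (algebraMap ℝ ℂ)).eval z * h z}

/-- Positive part of the logarithm. -/
def posLog (x : ℝ) : ℝ := max (Real.log x) 0

/-- `𝔫(t, g)`: number of poles of `g`, with multiplicity, in `{z : |z - it/2| ≤ t/2, |z| ≥ 1}`. -/
def tsujiSmalln (g : ℂ → ℂ) (t : ℝ) : ℝ :=
  ∑' z : {z : ℂ | ‖z - Complex.I * (t / 2)‖ ≤ t / 2 ∧ 1 ≤ ‖z‖},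
    (poleMult g z : ℝ)

/-- `𝔑(r, g)`. -/
def tsujiBigN (g : ℂ → ℂ) (r : ℝ) : ℝ :=
  ∫ t in (1 : ℝ)..r, tsujiSmalln g t / t ^ 2

/-- `𝔪(r, g)`. -/
def tsujiM (g : ℂ → ℂ) (r : ℝ) : ℝ :=
  (2 * Real.pi)⁻¹ * ∫ θ in Real.arcsin (1 / r)..(Real.pi - Real.arcsin (1 / r)),
    posLog ‖g ((r * Real.sin θ : ℝ) * Complex.exp (θ * Complex.I))‖ /
      (r * Real.sin θ ^ 2)

/-- The Tsuji characteristic `𝔗(r, g) = 𝔪(r, g) + 𝔑(r, g)`. -/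
def tsujiT (g : ℂ → ℂ) (r : ℝ) : ℝ := tsujiM g r + tsujiBigN g r

/-- `𝔗(r, g) = O(log r)` as `r → ∞`. -/
def TsujiLogBounded (g : ℂ → ℂ) : Prop :=
  ∃ C r₀ : ℝ, ∀ r : ℝ, r₀ ≤ r → tsujiT g r ≤ C * Real.log r

/-- `g` has at least `n` zeros, counted with multiplicity, in the set `S`. -/
def ZerosAtLeast (g : ℂ → ℂ) (S : Set ℂ) (n : ℕ) : Prop :=
  ∃ (zs : Finset ℂ) (m : ℂ → ℕ),
    (↑zs : Set ℂ) ⊆ S ∧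
    (∀ z ∈ zs, 1 ≤ m z ∧ ∀ k < m z, iteratedDeriv k g z = 0) ∧
    n ≤ ∑ z ∈ zs, m z

/-- The logarithmic derivative `L = f'/f`. -/
def Lfun (f : ℂ → ℂ) : ℂ → ℂ := fun z => deriv f z / f z

/-- The auxiliary function `F = (T·L − 1)/(L + T)`, `T = tan`. -/
def Ffun (f : ℂ → ℂ) : ℂ → ℂ := fun z =>
  (Complex.tan z * Lfun f z - 1) / (Lfun f z + Complex.tan z)

/-- The auxiliary function `s_a = T·(F − a)/(T − F)`. -/
def sfun (f : ℂ → ℂ) (a : ℂ) : ℂ → ℂ := fun z =>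
  Complex.tan z * (Ffun f z - a) / (Complex.tan z - Ffun f z)


lemma amhm_ennreal (n : ℕ) (u : Fin n → ℝ≥0∞)
    (hu : ∑ j, u j ≤ ENNReal.ofReal (2 * Real.pi)) :
    ENNReal.ofReal ((n : ℝ) ^ 2 / 2) ≤ ∑ j, ENNReal.ofReal Real.pi / u j := by
  by_cases hz : ∃ j, u j = 0
  · obtain ⟨j, hj⟩ := hz
    have htop : ENNReal.ofReal Real.pi / u j = ⊤ := by
      rw [hj, ENNReal.div_zero (by simp [ENNReal.ofReal_eq_zero, Real.pi_pos.not_ge])]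
    refine le_trans le_top ?_
    rw [← htop]
    exact Finset.single_le_sum (f := fun i => ENNReal.ofReal Real.pi / u i) (fun i _ => zero_le) (Finset.mem_univ j)
  · push_neg at hz
    have hut : ∀ j, u j ≠ ⊤ := by
      intro j
      have h1 : u j ≤ ∑ i, u i := Finset.single_le_sum (f := u) (fun i _ => zero_le) (Finset.mem_univ j)
      exact ne_top_of_le_ne_top ENNReal.ofReal_ne_top (h1.trans hu)
    set v : Fin n → ℝ := fun j => (u j).toReal with hv_def
    have hv : ∀ j, 0 < v j := fun j => ENNReal.toReal_pos (hz j) (hut j)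
    have huv : ∀ j, u j = ENNReal.ofReal (v j) := fun j => (ENNReal.ofReal_toReal (hut j)).symm
    have hterm : ∀ j, ENNReal.ofReal Real.pi / u j = ENNReal.ofReal (Real.pi / v j) := by
      intro j; rw [huv j, ENNReal.ofReal_div_of_pos (hv j)]
    have hsum : ∑ j, ENNReal.ofReal Real.pi / u j = ENNReal.ofReal (∑ j, Real.pi / v j) := by
      rw [ENNReal.ofReal_sum_of_nonneg (fun j _ => div_nonneg Real.pi_pos.le (hv j).le)]
      exact Finset.sum_congr rfl fun j _ => hterm j
    rw [hsum]
    apply ENNReal.ofReal_le_ofReal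
    -- real inequality
    have hsv : ∑ j, v j ≤ 2 * Real.pi := by
      have : ∑ j, u j = ENNReal.ofReal (∑ j, v j) := by
        rw [ENNReal.ofReal_sum_of_nonneg (fun j _ => (hv j).le)]
        exact Finset.sum_congr rfl fun j _ => huv j
      rw [this] at hu
      exact (ENNReal.ofReal_le_ofReal_iff (by positivity)).1 hu
    have hCS := Finset.sum_mul_sq_le_sq_mul_sq Finset.univ
      (fun j => Real.sqrt (v j)) (fun j => (Real.sqrt (v j))⁻¹)
    have h1 : ∀ j : Fin n, Real.sqrt (v j) * (Real.sqrt (v j))⁻¹ = 1 := fun j =>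
      mul_inv_cancel₀ (Real.sqrt_ne_zero'.2 (hv j))
    have h2 : ∀ j : Fin n, (Real.sqrt (v j)) ^ 2 = v j := fun j => Real.sq_sqrt (hv j).le
    have h3 : ∀ j : Fin n, ((Real.sqrt (v j))⁻¹) ^ 2 = (v j)⁻¹ := by
      intro j; rw [inv_pow, h2]
    simp only [h1, h2, h3, Finset.sum_const, Finset.card_univ, Fintype.card_fin,
      nsmul_eq_mul, mul_one] at hCS
    -- hCS : (n:ℝ)^2 ≤ (∑ v)(∑ v⁻¹)
    have hinv_nonneg : 0 ≤ ∑ j, (v j)⁻¹ := Finset.sum_nonneg fun j _ => (inv_nonneg.2 (hv j).le)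
    have h4 : (∑ j, v j) * ∑ j, (v j)⁻¹ ≤ (2 * Real.pi) * ∑ j, (v j)⁻¹ :=
      mul_le_mul_of_nonneg_right hsv hinv_nonneg
    have h5 : ∑ j, Real.pi / v j = Real.pi * ∑ j, (v j)⁻¹ := by
      rw [Finset.mul_sum]; exact Finset.sum_congr rfl fun j _ => div_eq_mul_inv _ _
    rw [h5]
    nlinarith [hCS, h4]

theorem stmt2 (A B M r : ℝ) (hA : 0 < A) (hAB : A < B) (hM : 0 < M) (hr : 1 < r)
    (N : ℕ) (D : Fin N → Set ℂ)
    (hdisj : ∀ i j, i ≠ j → Disjoint (D i) (D j))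
    (hopen : ∀ j, IsOpen (D j)) (hconn : ∀ j, IsConnected (D j))
    (hsc : ∀ j, SimplyConnectedSpace ↥(D j))
    (hsub : ∀ j, D j ⊆ {(0 : ℂ)}ᶜ)
    (hint : ∀ j, (∫⁻ t in Set.Icc (r ^ A) (r ^ B),
        ENNReal.ofReal Real.pi /
          (ENNReal.ofReal t *
            volume {θ : ℝ | θ ∈ Set.Ico 0 (2 * Real.pi) ∧
              (t : ℂ) * Complex.exp ((θ : ℂ) * Complex.I) ∈ D j}))
        ≤ ENNReal.ofReal (M * Real.log r)) :
    (N : ℝ) * (B - A) ≤ 2 * M := by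
  have hr0 : (0:ℝ) < r := lt_trans one_pos hr
  have hlog : 0 < Real.log r := Real.log_pos hr
  have ha1 : 1 < r ^ A := by
    have : r ^ (0:ℝ) < r ^ A := (Real.rpow_lt_rpow_left_iff hr).2 hA
    rwa [Real.rpow_zero] at this
  have ha0 : 0 < r ^ A := lt_trans one_pos ha1
  have hb0 : 0 < r ^ B := Real.rpow_pos_of_pos hr0 B
  have hab : r ^ A < r ^ B := (Real.rpow_lt_rpow_left_iff hr).2 hAB
  rcases Nat.eq_zero_or_pos N with hN | hN
  · subst hN; simp; positivity
  have hN0 : (0:ℝ) < N := by exact_mod_cast hN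
  -- measurability of t ↦ angular measure
  have hmeas : ∀ j : Fin N, Measurable fun t : ℝ =>
      volume {θ : ℝ | θ ∈ Set.Ico 0 (2 * Real.pi) ∧
        (t : ℂ) * Complex.exp ((θ : ℂ) * Complex.I) ∈ D j} := by
    intro j
    have hcont : Continuous fun p : ℝ × ℝ =>
        (p.1 : ℂ) * Complex.exp ((p.2 : ℂ) * Complex.I) := by fun_prop
    have hs : MeasurableSet {p : ℝ × ℝ | p.2 ∈ Set.Ico 0 (2 * Real.pi) ∧
        (p.1 : ℂ) * Complex.exp ((p.2 : ℂ) * Complex.I) ∈ D j} :=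
      (measurable_snd measurableSet_Ico).inter (((hopen j).preimage hcont).measurableSet)
    exact measurable_measure_prodMk_left (ν := volume) hs
  have hfmeas : ∀ j : Fin N, Measurable fun t : ℝ => ENNReal.ofReal Real.pi /
      (ENNReal.ofReal t *
        volume {θ : ℝ | θ ∈ Set.Ico 0 (2 * Real.pi) ∧
          (t : ℂ) * Complex.exp ((θ : ℂ) * Complex.I) ∈ D j}) := fun j =>
    measurable_const.div ((ENNReal.measurable_ofReal.comp measurable_id).mul (hmeas j))
  -- disjointness gives sum of angular measures ≤ 2π
  have hsum : ∀ t : ℝ, (∑ j : Fin N,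
      volume {θ : ℝ | θ ∈ Set.Ico 0 (2 * Real.pi) ∧
        (t : ℂ) * Complex.exp ((θ : ℂ) * Complex.I) ∈ D j}) ≤ ENNReal.ofReal (2 * Real.pi) := by
    intro t
    set S : Fin N → Set ℝ := fun j => {θ : ℝ | θ ∈ Set.Ico 0 (2 * Real.pi) ∧
        (t : ℂ) * Complex.exp ((θ : ℂ) * Complex.I) ∈ D j} with hS_def
    have hcont : Continuous fun θ : ℝ => (t : ℂ) * Complex.exp ((θ : ℂ) * Complex.I) := by
      fun_prop
    have hSm : ∀ j, MeasurableSet (S j) := fun j =>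
      measurableSet_Ico.inter (((hopen j).preimage hcont).measurableSet)
    have hdisjS : Set.PairwiseDisjoint (↑(Finset.univ : Finset (Fin N))) S := by
      intro i _ j _ hij
      refine Set.disjoint_left.2 fun θ hi hj' => ?_
      exact Set.disjoint_left.1 (hdisj i j hij) hi.2 hj'.2
    calc ∑ j : Fin N, volume (S j)
        = volume (⋃ j ∈ (Finset.univ : Finset (Fin N)), S j) :=
          (measure_biUnion_finset hdisjS fun j _ => hSm j).symm
      _ ≤ volume (Set.Ico 0 (2 * Real.pi)) := by
          refine measure_mono ?_
          intro θ hθ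
          simp only [Finset.mem_univ, Set.iUnion_true, Set.mem_iUnion] at hθ
          obtain ⟨j, hj⟩ := hθ
          exact hj.1
      _ = ENNReal.ofReal (2 * Real.pi) := by rw [Real.volume_Ico, sub_zero]
  -- pointwise lower bound
  have hpt : ∀ t : ℝ, 0 < t →
      ENNReal.ofReal (t⁻¹ * ((N : ℝ) ^ 2 / 2)) ≤ ∑ j : Fin N, ENNReal.ofReal Real.pi /
        (ENNReal.ofReal t *
          volume {θ : ℝ | θ ∈ Set.Ico 0 (2 * Real.pi) ∧
            (t : ℂ) * Complex.exp ((θ : ℂ) * Complex.I) ∈ D j}) := by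
    intro t ht
    have key := amhm_ennreal N (fun j =>
      volume {θ : ℝ | θ ∈ Set.Ico 0 (2 * Real.pi) ∧
        (t : ℂ) * Complex.exp ((θ : ℂ) * Complex.I) ∈ D j}) (hsum t)
    have hterm : ∀ j : Fin N, ENNReal.ofReal Real.pi /
        (ENNReal.ofReal t *
          volume {θ : ℝ | θ ∈ Set.Ico 0 (2 * Real.pi) ∧
            (t : ℂ) * Complex.exp ((θ : ℂ) * Complex.I) ∈ D j}) =
        (ENNReal.ofReal t)⁻¹ * (ENNReal.ofReal Real.pi /
          volume {θ : ℝ | θ ∈ Set.Ico 0 (2 * Real.pi) ∧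
            (t : ℂ) * Complex.exp ((θ : ℂ) * Complex.I) ∈ D j}) := by
      intro j
      rw [div_eq_mul_inv, div_eq_mul_inv,
        ENNReal.mul_inv (Or.inl (ENNReal.ofReal_pos.2 ht).ne') (Or.inl ENNReal.ofReal_ne_top)]
      ring
    calc ENNReal.ofReal (t⁻¹ * ((N : ℝ) ^ 2 / 2))
        = (ENNReal.ofReal t)⁻¹ * ENNReal.ofReal ((N : ℝ) ^ 2 / 2) := by
          rw [ENNReal.ofReal_mul (inv_nonneg.2 ht.le), ENNReal.ofReal_inv_of_pos ht]
      _ ≤ (ENNReal.ofReal t)⁻¹ * ∑ j : Fin N, ENNReal.ofReal Real.pi /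
            volume {θ : ℝ | θ ∈ Set.Ico 0 (2 * Real.pi) ∧
              (t : ℂ) * Complex.exp ((θ : ℂ) * Complex.I) ∈ D j} :=
          mul_le_mul_right key _
      _ = _ := by
          rw [Finset.mul_sum]
          exact Finset.sum_congr rfl fun j _ => (hterm j).symm
  -- integral estimates
  have step1 : (∫⁻ t in Set.Icc (r ^ A) (r ^ B),
      ENNReal.ofReal (t⁻¹ * ((N : ℝ) ^ 2 / 2))) ≤
      ∑ j : Fin N, ∫⁻ t in Set.Icc (r ^ A) (r ^ B), ENNReal.ofReal Real.pi /
        (ENNReal.ofReal t *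
          volume {θ : ℝ | θ ∈ Set.Ico 0 (2 * Real.pi) ∧
            (t : ℂ) * Complex.exp ((θ : ℂ) * Complex.I) ∈ D j}) := by
    rw [← lintegral_finset_sum _ fun j _ => hfmeas j]
    refine lintegral_mono_ae ((ae_restrict_iff' measurableSet_Icc).2 (.of_forall fun t ht => ?_))
    exact hpt t (lt_trans one_pos (lt_of_lt_of_le ha1 ht.1))
  have step2 : (∑ j : Fin N, ∫⁻ t in Set.Icc (r ^ A) (r ^ B), ENNReal.ofReal Real.pi /
        (ENNReal.ofReal t *
          volume {θ : ℝ | θ ∈ Set.Ico 0 (2 * Real.pi) ∧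
            (t : ℂ) * Complex.exp ((θ : ℂ) * Complex.I) ∈ D j})) ≤
      ENNReal.ofReal ((N : ℝ) * (M * Real.log r)) := by
    calc (∑ j : Fin N, _) ≤ ∑ _j : Fin N, ENNReal.ofReal (M * Real.log r) :=
          Finset.sum_le_sum fun j _ => hint j
      _ = (N : ℝ≥0∞) * ENNReal.ofReal (M * Real.log r) := by
          simp [Finset.sum_const, Finset.card_univ, nsmul_eq_mul]
      _ = ENNReal.ofReal ((N : ℝ) * (M * Real.log r)) := by
          rw [← ENNReal.ofReal_natCast N, ← ENNReal.ofReal_mul (Nat.cast_nonneg N)]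
  have step0 : ENNReal.ofReal (((N : ℝ) ^ 2 / 2) * ((B - A) * Real.log r)) ≤
      ∫⁻ t in Set.Icc (r ^ A) (r ^ B), ENNReal.ofReal (t⁻¹ * ((N : ℝ) ^ 2 / 2)) := by
    have hInt : IntegrableOn (fun t : ℝ => t⁻¹ * ((N : ℝ) ^ 2 / 2))
        (Set.Icc (r ^ A) (r ^ B)) := by
      apply ContinuousOn.integrableOn_Icc
      exact (continuousOn_id.inv₀ fun x hx =>
        (lt_of_lt_of_le ha0 hx.1).ne').mul continuousOn_const
    have hnn : 0 ≤ᵐ[volume.restrict (Set.Icc (r ^ A) (r ^ B))]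
        fun t : ℝ => t⁻¹ * ((N : ℝ) ^ 2 / 2) := by
      refine (ae_restrict_iff' measurableSet_Icc).2 (.of_forall fun t ht => ?_)
      have ht0 : 0 < t := lt_of_lt_of_le ha0 ht.1
      positivity
    rw [← MeasureTheory.ofReal_integral_eq_lintegral_ofReal hInt hnn]
    apply ENNReal.ofReal_le_ofReal
    have hval : (∫ t in Set.Icc (r ^ A) (r ^ B), t⁻¹ * ((N : ℝ) ^ 2 / 2)) =
        ((N : ℝ) ^ 2 / 2) * ((B - A) * Real.log r) := by
      rw [MeasureTheory.integral_Icc_eq_integral_Ioc,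
        ← intervalIntegral.integral_of_le hab.le,
        intervalIntegral.integral_mul_const, integral_inv_of_pos ha0 hb0,
        ← Real.rpow_sub hr0, Real.log_rpow hr0]
      ring
    rw [hval]
  have final := (step0.trans (step1.trans step2))
  have hreal : ((N : ℝ) ^ 2 / 2) * ((B - A) * Real.log r) ≤ (N : ℝ) * (M * Real.log r) :=
    (ENNReal.ofReal_le_ofReal_iff (by positivity)).1 final
  have h1 : (N : ℝ) ^ 2 / 2 * (B - A) ≤ (N : ℝ) * M := by
    have h1' : ((N : ℝ) ^ 2 / 2 * (B - A)) * Real.log r ≤ ((N : ℝ) * M) * Real.log r := by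
      nlinarith [hreal]
    exact le_of_mul_le_mul_right h1' hlog
  nlinarith [h1, hN0]


end
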